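/- For all real coefficients a_{ij}, b_{ij} (1 ≤ i,j ≤ 2) and a₁, a₂, a₃, b₁, b₂, b₃, define χ₂ : ℝ → ℝ by χ₂(φ) = cosφ|cosφ|(a₁₁cosφ + b₁₁sinφ) + cosφ|sinφ|(a₁₂cosφ + b₁₂sinφ) + sinφ|cosφ|(a₂₁cosφ + b₂₁sinφ) + sinφ|sinφ|(a₂₂cosφ + b₂₂sinφ) + (a₁ − b₂ − a₃)cos³φ + (b₁ + a₂ − b₃)sinφ·cos²φ + (b₂ + a₃)cosφ + b₃sinφ. Then ∫₀^{2π} χ₂(φ) dφ = (4/3)·(2a₁₁ + a₁₂ + b₂₁ + 2b₂₂) = (4/3)·σ_#. In particular the smooth quadratic contributions (the terms with a₁, a₂, a₃, b₁, b₂, b₃) integrate to zero, and the average of the quadratic coefficient in the averaged radial normal form equals (2/(3π))·σ_#. -/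

import Mathlib

open Real intervalIntegral

noncomputable def F (c3 c2s s2c s3 c1 s1 : ℝ) (x : ℝ) : ℝ :=
  c3 * (sin x - sin x ^ 3 / 3) + c2s * (-(cos x ^ 3) / 3) + s2c * (sin x ^ 3 / 3) +
    s3 * (cos x ^ 3 / 3 - cos x) + c1 * sin x - s1 * cos x

lemma antider (c3 c2s s2c s3 c1 s1 a b : ℝ) :
    (∫ x in a..b, (c3 * cos x ^ 3 + c2s * (cos x ^ 2 * sin x) + s2c * (sin x ^ 2 * cos x) +
      s3 * sin x ^ 3 + c1 * cos x + s1 * sin x)) =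
    F c3 c2s s2c s3 c1 s1 b - F c3 c2s s2c s3 c1 s1 a := by
  apply intervalIntegral.integral_eq_sub_of_hasDerivAt
  · intro x _
    have hs := Real.hasDerivAt_sin x
    have hc := Real.hasDerivAt_cos x
    unfold F
    have H := ((((((hs.sub ((hs.pow 3).div_const 3)).const_mul c3).add
        ((((hc.pow 3).neg).div_const 3).const_mul c2s)).add
        (((hs.pow 3).div_const 3).const_mul s2c)).add
        ((((hc.pow 3).div_const 3).sub hc).const_mul s3)).add
        (hs.const_mul c1)).sub (hc.const_mul s1)
    convert H using 1
    · rfl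
    have h := sin_sq_add_cos_sq x
    push_cast
    linear_combination (c3 * cos x + s3 * sin x) * h
  · apply Continuous.intervalIntegrable; fun_prop

lemma quarter (a11 a12 a21 a22 b11 b12 b21 b22 a1 a2 a3 b1 b2 b3 εc εs a b : ℝ)
    (hc : ∀ x ∈ Set.uIcc a b, |cos x| = εc * cos x)
    (hs : ∀ x ∈ Set.uIcc a b, |sin x| = εs * sin x) :
    (∫ φ in a..b,
      (cos φ * |cos φ| * (a11 * cos φ + b11 * sin φ) +
       cos φ * |sin φ| * (a12 * cos φ + b12 * sin φ) +
       sin φ * |cos φ| * (a21 * cos φ + b21 * sin φ) +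
       sin φ * |sin φ| * (a22 * cos φ + b22 * sin φ) +
       (a1 - b2 - a3) * cos φ ^ 3 + (b1 + a2 - b3) * sin φ * cos φ ^ 2 +
       (b2 + a3) * cos φ + b3 * sin φ))
    = F (εc * a11 + (a1 - b2 - a3)) (εc * b11 + εs * a12 + εc * a21 + (b1 + a2 - b3))
        (εs * b12 + εc * b21 + εs * a22) (εs * b22) (b2 + a3) b3 b -
      F (εc * a11 + (a1 - b2 - a3)) (εc * b11 + εs * a12 + εc * a21 + (b1 + a2 - b3))
        (εs * b12 + εc * b21 + εs * a22) (εs * b22) (b2 + a3) b3 a := by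
  rw [← antider]
  apply intervalIntegral.integral_congr
  intro x hx
  dsimp only
  rw [hc x hx, hs x hx]
  ring

/-- The angular average of the quadratic radial coefficient `χ₂` of the planar
system (including both the second-order modulus terms with coefficients `a_{ij}, b_{ij}`
and the smooth quadratic terms with coefficients `a₁,a₂,a₃,b₁,b₂,b₃`) satisfies
`∫₀^{2π} χ₂ = (4/3)·σ_#` with `σ_# = 2a₁₁ + a₁₂ + b₂₁ + 2b₂₂`; in particular the smooth
quadratic contributions integrate to zero. -/
theorem stmt12 (a11 a12 a21 a22 b11 b12 b21 b22 a1 a2 a3 b1 b2 b3 : ℝ) :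
    (∫ φ in (0:ℝ)..(2 * π),
      (cos φ * |cos φ| * (a11 * cos φ + b11 * sin φ) +
       cos φ * |sin φ| * (a12 * cos φ + b12 * sin φ) +
       sin φ * |cos φ| * (a21 * cos φ + b21 * sin φ) +
       sin φ * |sin φ| * (a22 * cos φ + b22 * sin φ) +
       (a1 - b2 - a3) * cos φ ^ 3 + (b1 + a2 - b3) * sin φ * cos φ ^ 2 +
       (b2 + a3) * cos φ + b3 * sin φ))
    = 4 / 3 * (2 * a11 + a12 + b21 + 2 * b22) := by
  have hπ := pi_gt_three
  have hint : ∀ a b : ℝ, IntervalIntegrable (fun φ =>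
      (cos φ * |cos φ| * (a11 * cos φ + b11 * sin φ) +
       cos φ * |sin φ| * (a12 * cos φ + b12 * sin φ) +
       sin φ * |cos φ| * (a21 * cos φ + b21 * sin φ) +
       sin φ * |sin φ| * (a22 * cos φ + b22 * sin φ) +
       (a1 - b2 - a3) * cos φ ^ 3 + (b1 + a2 - b3) * sin φ * cos φ ^ 2 +
       (b2 + a3) * cos φ + b3 * sin φ)) MeasureTheory.volume a b := by
    intro a b
    apply Continuous.intervalIntegrable
    fun_prop
  rw [← intervalIntegral.integral_add_adjacent_intervals (a := (0:ℝ)) (b := π) (c := 2 * π)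
      (hint _ _) (hint _ _),
    ← intervalIntegral.integral_add_adjacent_intervals (a := (0:ℝ)) (b := π/2) (c := π)
      (hint _ _) (hint _ _),
    ← intervalIntegral.integral_add_adjacent_intervals (a := π) (b := π + π/2) (c := 2 * π)
      (hint _ _) (hint _ _)]
  have q1 := quarter a11 a12 a21 a22 b11 b12 b21 b22 a1 a2 a3 b1 b2 b3 1 1 0 (π/2)
    (by
      intro x hx
      rw [Set.uIcc_of_le (by linarith)] at hx
      rw [abs_of_nonneg (cos_nonneg_of_mem_Icc ⟨by linarith [hx.1], by linarith [hx.2]⟩)]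
      ring)
    (by
      intro x hx
      rw [Set.uIcc_of_le (by linarith)] at hx
      rw [abs_of_nonneg (sin_nonneg_of_nonneg_of_le_pi hx.1 (by linarith [hx.2]))]
      ring)
  have q2 := quarter a11 a12 a21 a22 b11 b12 b21 b22 a1 a2 a3 b1 b2 b3 (-1) 1 (π/2) π
    (by
      intro x hx
      rw [Set.uIcc_of_le (by linarith)] at hx
      rw [abs_of_nonpos (cos_nonpos_of_pi_div_two_le_of_le hx.1 (by linarith [hx.2]))]
      ring)
    (by
      intro x hx
      rw [Set.uIcc_of_le (by linarith)] at hx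
      rw [abs_of_nonneg (sin_nonneg_of_nonneg_of_le_pi (by linarith [hx.1]) hx.2)]
      ring)
  have q3 := quarter a11 a12 a21 a22 b11 b12 b21 b22 a1 a2 a3 b1 b2 b3 (-1) (-1) π (π + π/2)
    (by
      intro x hx
      rw [Set.uIcc_of_le (by linarith)] at hx
      rw [abs_of_nonpos (cos_nonpos_of_pi_div_two_le_of_le (by linarith [hx.1]) hx.2)]
      ring)
    (by
      intro x hx
      rw [Set.uIcc_of_le (by linarith)] at hx
      have h1 : sin (x - π) = -sin x := sin_sub_pi x
      have h2 : 0 ≤ sin (x - π) :=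
        sin_nonneg_of_nonneg_of_le_pi (by linarith [hx.1]) (by linarith [hx.2])
      rw [abs_of_nonpos (by linarith)]
      ring)
  have q4 := quarter a11 a12 a21 a22 b11 b12 b21 b22 a1 a2 a3 b1 b2 b3 1 (-1) (π + π/2) (2 * π)
    (by
      intro x hx
      rw [Set.uIcc_of_le (by linarith)] at hx
      have h1 : cos (x - 2 * π) = cos x := cos_sub_two_pi x
      have h2 : 0 ≤ cos (x - 2 * π) :=
        cos_nonneg_of_mem_Icc ⟨by linarith [hx.1], by linarith [hx.2]⟩
      rw [abs_of_nonneg (by linarith)]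
      ring)
    (by
      intro x hx
      rw [Set.uIcc_of_le (by linarith)] at hx
      have h1 : sin (x - 2 * π) = sin x := sin_sub_two_pi x
      have h2 : sin (x - 2 * π) ≤ 0 :=
        sin_nonpos_of_nonpos_of_neg_pi_le (by linarith [hx.2]) (by linarith [hx.1])
      rw [abs_of_nonpos (by linarith)]
      ring)
  rw [q1, q2, q3, q4]
  simp only [F, Real.sin_pi, Real.cos_pi, Real.sin_pi_div_two, Real.cos_pi_div_two,
    Real.sin_zero, Real.cos_zero, Real.sin_two_pi, Real.cos_two_pi, Real.sin_add,
    Real.cos_add]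
  ring
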